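/- Theorem (zeros are eigenvalues of A_η): with the zero-subspace transformation and (A,B,C) of relative degree ρ, for every s ∈ 𝕜 one has C * adjugate(s·I_n − A) * B = 0 if and only if det(s·I_{l_z} − A_η) = 0. In other words, the zeros of the system (A,B,C), i.e., the roots of s ↦ C·adjugate(sI−A)·B, are exactly the eigenvalues of A_η. -/

import Mathlib

open Matrix

lemma detD_aux {𝕜 : Type*} [Field 𝕜] {ρ : ℕ} (hρ : 1 ≤ ρ) (s : 𝕜)
    (D : Matrix (Fin ρ) (Fin ρ) 𝕜)
    (hD : ∀ k m : Fin ρ, D k m =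
      if (k : ℕ) = ρ - 1 then (if (m : ℕ) = 0 then 1 else 0)
      else (if k = m then s else 0) - (if (m : ℕ) = (k : ℕ) + 1 then 1 else 0)) :
    D.det = 1 := by
  obtain ⟨r, rfl⟩ : ∃ r, ρ = r + 1 := ⟨ρ - 1, by omega⟩
  set E : Matrix (Fin (r+1)) (Fin (r+1)) 𝕜 :=
    Matrix.of (fun a b : Fin (r+1) => if (b : ℕ) ≤ (a : ℕ) then s ^ ((a : ℕ) - (b : ℕ)) else 0)
    with hE
  have hEtri : E.BlockTriangular OrderDual.toDual := by
    intro i j hij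
    simp only [hE, of_apply]
    rw [if_neg (by exact Nat.not_le.mpr hij)]
  have hEdet : E.det = 1 := by
    rw [det_of_lowerTriangular E hEtri]
    apply Finset.prod_eq_one
    intro i _
    simp [hE]
  set σ : Equiv.Perm (Fin (r+1)) := finRotate (r+1) with hσ
  set c : Fin (r+1) → 𝕜 := fun k => if (k : ℕ) = r then 1 else -1 with hc
  have key : D * E = Matrix.diagonal c * σ.permMatrix 𝕜 := by
    ext k j
    rw [mul_apply, diagonal_mul]
    have hperm : (σ.permMatrix 𝕜) k j = if σ k = j then 1 else 0 := by
      simp [Equiv.Perm.permMatrix, PEquiv.toMatrix_apply, Equiv.toPEquiv_apply, eq_comm]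
    rw [hperm]
    by_cases hk : (k : ℕ) = r
    · -- last row
      have step : ∀ m : Fin (r+1), D k m * E m j = if m = (0 : Fin (r+1)) then E (0 : Fin (r+1)) j else 0 := by
        intro m
        rw [hD]
        rw [if_pos (by omega : (k:ℕ) = r + 1 - 1)]
        by_cases hm : m = (0 : Fin (r+1))
        · rw [if_pos hm, if_pos (by simp [hm]), one_mul, hm]
        · rw [if_neg hm, if_neg (by
            intro h
            exact hm (Fin.ext (by simpa using h))), zero_mul]
      rw [Finset.sum_congr rfl (fun m _ => step m)]
      simp only [Finset.sum_ite_eq', Finset.mem_univ, if_true]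
      have hσk : σ k = 0 := by
        rw [hσ, finRotate_succ_apply]
        ext
        rw [Fin.val_add_one]
        rw [if_pos (Fin.ext (by simpa using hk))]
        simp
      have hE0 : E (0 : Fin (r+1)) j = if (j : ℕ) = 0 then 1 else 0 := by
        simp only [hE, of_apply]
        by_cases hj : (j : ℕ) = 0
        · rw [if_pos (show (j:ℕ) ≤ ((0 : Fin (r+1)) : ℕ) by simp [hj]), if_pos hj, hj]; simp
        · rw [if_neg (show ¬ (j:ℕ) ≤ ((0 : Fin (r+1)) : ℕ) by rw [Fin.val_zero]; omega), if_neg hj]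
      rw [hE0, hσk]
      simp only [hc]
      rw [if_pos hk]
      simp only [one_mul]
      by_cases hj : (j : ℕ) = 0
      · rw [if_pos hj, if_pos (Fin.ext (by simp [hj]))]
      · rw [if_neg hj, if_neg (fun h => hj (by simpa using congrArg Fin.val h.symm))]
    · -- other rows
      have hk1 : (k : ℕ) + 1 < r + 1 := by omega
      have step : ∀ m : Fin (r+1), D k m * E m j =
          (if m = k then s * E k j else 0) - (if m = (⟨(k:ℕ)+1, hk1⟩ : Fin (r+1)) then E ⟨(k:ℕ)+1, hk1⟩ j else 0) := by
        intro m
        rw [hD, if_neg (by omega : ¬ (k:ℕ) = r + 1 - 1)]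
        by_cases hm : m = k
        · subst hm
          rw [if_pos rfl, if_pos rfl, if_neg (by omega)]
          have : m ≠ (⟨(m:ℕ)+1, hk1⟩ : Fin (r+1)) := by
            intro h
            have := congrArg Fin.val h
            simp at this
          rw [if_neg this]
          ring
        · rw [if_neg hm, if_neg (Ne.symm hm)]
          by_cases hm2 : m = (⟨(k:ℕ)+1, hk1⟩ : Fin (r+1))
          · rw [if_pos (by simp [hm2]), if_pos hm2, hm2]
            ring
          · rw [if_neg (fun h => hm2 (Fin.ext h)), if_neg hm2]
            ring
      rw [Finset.sum_congr rfl (fun m _ => step m), Finset.sum_sub_distrib]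
      simp only [Finset.sum_ite_eq', Finset.mem_univ, if_true]
      have hσk : σ k = ⟨(k:ℕ)+1, hk1⟩ := by
        rw [hσ, finRotate_succ_apply]
        ext
        rw [Fin.val_add_one_of_lt (by rw [Fin.lt_iff_val_lt_val]; simp [Fin.last]; omega)]
      rw [hσk]
      simp only [hc]
      rw [if_neg hk]
      by_cases hj : j = (⟨(k:ℕ)+1, hk1⟩ : Fin (r+1))
      · subst hj
        rw [if_pos rfl]
        have h1 : E k (⟨(k:ℕ)+1, hk1⟩ : Fin (r+1)) = 0 := by
          simp only [hE, of_apply]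
          rw [if_neg (by simp)]
        have h2 : E ⟨(k:ℕ)+1, hk1⟩ (⟨(k:ℕ)+1, hk1⟩ : Fin (r+1)) = 1 := by
          simp [hE]
        rw [h1, h2]
        ring
      · rw [if_neg (fun h => hj h.symm)]
        by_cases hjk : (j : ℕ) ≤ (k : ℕ)
        · have h1 : E k j = s ^ ((k:ℕ) - (j:ℕ)) := by simp only [hE, of_apply]; rw [if_pos hjk]
          have h2 : E ⟨(k:ℕ)+1, hk1⟩ j = s ^ ((k:ℕ)+1 - (j:ℕ)) := by
            simp only [hE, of_apply]; rw [if_pos (by omega)]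
          rw [h1, h2]
          have : (k:ℕ) + 1 - (j:ℕ) = ((k:ℕ) - (j:ℕ)) + 1 := by omega
          rw [this, pow_succ]
          ring
        · have hjk2 : ¬ (j : ℕ) ≤ (k : ℕ) + 1 := by
            intro h
            exact hj (Fin.ext (by simp only [Fin.val_mk]; omega))
          have h1 : E k j = 0 := by simp only [hE, of_apply]; rw [if_neg hjk]
          have h2 : E ⟨(k:ℕ)+1, hk1⟩ j = 0 := by simp only [hE, of_apply]; rw [if_neg hjk2]
          rw [h1, h2]
          ring
  have : D.det * E.det = (Matrix.diagonal c).det * (σ.permMatrix 𝕜).det := by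
    rw [← det_mul, ← det_mul, key]
  rw [hEdet, mul_one, det_diagonal, det_permutation] at this
  rw [this, hσ, sign_finRotate]
  have hcprod : ∏ i, c i = (-1) ^ r := by
    rw [Fin.prod_univ_castSucc]
    have h1 : c (Fin.last r) = 1 := by simp [hc, Fin.last]
    have h2 : ∀ i : Fin r, c (Fin.castSucc i) = -1 := by
      intro i; simp only [hc, Fin.coe_castSucc]; rw [if_neg (by omega)]
    rw [h1, mul_one, Finset.prod_congr rfl (fun i _ => h2 i), Finset.prod_const]
    simp
  rw [hcprod]
  push_cast
  rw [← mul_pow]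
  norm_num

lemma adj_smul_inv {𝕜 : Type*} [Field 𝕜] {N : Type*} [DecidableEq N] [Fintype N]
    (M : Matrix N N 𝕜) (h : IsUnit M.det) : M.det • M⁻¹ = M.adjugate := by
  rw [Matrix.inv_def, smul_smul, Ring.mul_inverse_cancel _ h, one_smul]

lemma adj_conj {𝕜 : Type*} [Field 𝕜] {N : Type*} [DecidableEq N] [Fintype N]
    (T M : Matrix N N 𝕜) (h : IsUnit T.det) :
    (T * M * T⁻¹).adjugate = T * M.adjugate * T⁻¹ := by
  rw [Matrix.adjugate_mul_distrib, Matrix.adjugate_mul_distrib]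
  rw [← adj_smul_inv T h, ← adj_smul_inv T⁻¹ (T.isUnit_nonsing_inv_det h)]
  rw [Matrix.nonsing_inv_nonsing_inv T h, Matrix.det_nonsing_inv]
  rw [Matrix.mul_smul, Matrix.smul_mul, Matrix.mul_smul, smul_smul]
  rw [Ring.inverse_mul_cancel _ h, one_smul, ← Matrix.mul_assoc]

/-- **zeros are the eigenvalues of `A_η`.** For every `s`,
`C * adj(s I - A) * B = 0` iff `det(s I - A_η) = 0`: the zeros of the system `(A, B, C)`
are exactly the eigenvalues of `A_η`. -/
theorem stmt10 {𝕜 : Type*} [Field 𝕜] {n ρ : ℕ} (hn : 1 ≤ n) (hρ : 1 ≤ ρ) (hρn : ρ ≤ n)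
    (A : Matrix (Fin n) (Fin n) 𝕜) (B : Matrix (Fin n) (Fin 1) 𝕜)
    (C : Matrix (Fin 1) (Fin n) 𝕜)
    (hrd : ∀ i : ℕ, i + 2 ≤ ρ → C * A ^ i * B = 0)
    (hrd' : C * A ^ (ρ - 1) * B ≠ 0)
    (Cbar : Matrix (Fin ρ) (Fin n) 𝕜)
    (hCbar : ∀ (i : Fin ρ) (j : Fin n), Cbar i j = (C * A ^ (i : ℕ)) 0 j)
    (Bz : Matrix (Fin (n - ρ)) (Fin n) 𝕜) (hBz : Bz * B = 0)
    (T : Matrix (Fin n) (Fin n) 𝕜)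
    (hT : ∀ (i : Fin n) (j : Fin n),
      T i j = if h : (i : ℕ) < n - ρ then Bz ⟨i, h⟩ j
              else Cbar ⟨(i : ℕ) - (n - ρ), by omega⟩ j)
    (hTinv : IsUnit T.det)
    (Seta : Matrix (Fin n) (Fin (n - ρ)) 𝕜)
    (hSeta : ∀ (i : Fin n) (k : Fin (n - ρ)), Seta i k = T⁻¹ i ⟨(k : ℕ), by omega⟩)
    (Sxi : Matrix (Fin n) (Fin ρ) 𝕜)
    (hSxi : ∀ (i : Fin n) (k : Fin ρ), Sxi i k = T⁻¹ i ⟨n - ρ + (k : ℕ), by omega⟩)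
    (Aeta : Matrix (Fin (n - ρ)) (Fin (n - ρ)) 𝕜)
    (hAeta : Aeta = Bz * A * Seta)
    :
    ∀ s : 𝕜,
      (C * (s • (1 : Matrix (Fin n) (Fin n) 𝕜) - A).adjugate * B) 0 0 = 0 ↔
      (s • (1 : Matrix (Fin (n - ρ)) (Fin (n - ρ)) 𝕜) - Aeta).det = 0 := by
  have hln : n - ρ < n := by omega
  have hn1 : n - 1 < n := by omega
  have hTT : T * T⁻¹ = 1 := Matrix.mul_nonsing_inv T hTinv
  have hTT' : T⁻¹ * T = 1 := Matrix.nonsing_inv_mul T hTinv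
  -- rows of T indexed from n - ρ are C * A ^ k
  have hTrow : ∀ (k : ℕ) (hk : k < ρ) (p : Fin n),
      T ⟨n - ρ + k, by omega⟩ p = (C * A ^ k) 0 p := by
    intro k hk p
    rw [hT, dif_neg (by simp), hCbar]
    have h2 : n - ρ + k - (n - ρ) = k := by omega
    simp [h2]
  -- C is row (n - ρ) of T
  have hCrow : ∀ p, T ⟨n - ρ, hln⟩ p = C 0 p := by
    intro p
    have := hTrow 0 (by omega) p
    simpa [pow_zero] using this
  -- C * T⁻¹ is a standard basis row
  have hCT : ∀ j, (C * T⁻¹) 0 j = (1 : Matrix (Fin n) (Fin n) 𝕜) ⟨n - ρ, hln⟩ j := by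
    intro j
    rw [Matrix.mul_apply, ← hTT, Matrix.mul_apply]
    exact Finset.sum_congr rfl fun p _ => by rw [hCrow]
  -- middle rows of T * A * T⁻¹
  have hTArow : ∀ (k : ℕ) (hk : k + 1 < ρ) (j : Fin n),
      (T * A * T⁻¹) ⟨n - ρ + k, by omega⟩ j
        = (1 : Matrix (Fin n) (Fin n) 𝕜) ⟨n - ρ + (k + 1), by omega⟩ j := by
    intro k hk j
    have hTA : ∀ m, (T * A) ⟨n - ρ + k, by omega⟩ m = T ⟨n - ρ + (k + 1), by omega⟩ m := by
      intro m
      rw [Matrix.mul_apply, hTrow (k+1) hk m]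
      calc (∑ p, T ⟨n - ρ + k, by omega⟩ p * A p m)
          = ∑ p, (C * A ^ k) 0 p * A p m :=
            Finset.sum_congr rfl fun p _ => by rw [hTrow k (by omega)]
        _ = (C * A ^ k * A) 0 m := (Matrix.mul_apply).symm
        _ = (C * A ^ (k+1)) 0 m := by rw [Matrix.mul_assoc, ← pow_succ]
    rw [Matrix.mul_apply, ← hTT, Matrix.mul_apply]
    exact Finset.sum_congr rfl fun m _ => by rw [hTA]
  -- T * B is concentrated in the last entry
  have hTB : ∀ jj : Fin n,
      (T * B) jj 0 = if (jj : ℕ) = n - 1 then (C * A ^ (ρ - 1) * B) 0 0 else 0 := by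
    intro jj
    by_cases hjl : (jj : ℕ) < n - ρ
    · rw [Matrix.mul_apply, if_neg (by omega)]
      calc (∑ p, T jj p * B p 0)
          = ∑ p, Bz ⟨jj, hjl⟩ p * B p 0 :=
            Finset.sum_congr rfl fun p _ => by rw [hT, dif_pos hjl]
        _ = (Bz * B) ⟨jj, hjl⟩ 0 := (Matrix.mul_apply).symm
        _ = 0 := by rw [hBz]; simp
    · have hk : (jj : ℕ) - (n - ρ) < ρ := by omega
      have hjj : jj = ⟨n - ρ + ((jj : ℕ) - (n - ρ)), by omega⟩ := Fin.ext (by simp; omega)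
      rw [Matrix.mul_apply]
      have hsum : (∑ p, T jj p * B p 0) = (C * A ^ ((jj : ℕ) - (n - ρ)) * B) 0 0 := by
        rw [Matrix.mul_apply]
        refine Finset.sum_congr rfl fun p _ => ?_
        conv_lhs => rw [hjj]
        rw [hTrow _ hk]
      rw [hsum]
      by_cases hlast : (jj : ℕ) = n - 1
      · rw [if_pos hlast]
        have : (jj : ℕ) - (n - ρ) = ρ - 1 := by omega
        rw [this]
      · rw [if_neg hlast, hrd ((jj : ℕ) - (n - ρ)) (by omega)]
        simp
  -- b ≠ 0
  have hb : (C * A ^ (ρ - 1) * B) 0 0 ≠ 0 := by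
    intro h
    apply hrd'
    ext i j
    rw [Subsingleton.elim i 0, Subsingleton.elim j 0, h]
    simp
  intro s
  set M : Matrix (Fin n) (Fin n) 𝕜 := s • 1 - A with hM
  have hconj : T * M * T⁻¹ = s • 1 - T * A * T⁻¹ := by
    rw [hM, Matrix.mul_sub, Matrix.sub_mul, Matrix.mul_smul, Matrix.mul_one,
      Matrix.smul_mul, hTT]
  have hMt : ∀ a c : Fin n,
      (T * M * T⁻¹) a c = (if a = c then s else 0) - (T * A * T⁻¹) a c := by
    intro a c
    rw [hconj]
    simp [Matrix.sub_apply, Matrix.smul_apply, Matrix.one_apply, mul_ite, mul_one, mul_zero]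
  have hTAT : ∀ a c : Fin n, n - ρ ≤ (a : ℕ) → (a : ℕ) < n - 1 →
      (T * A * T⁻¹) a c = if (c : ℕ) = (a : ℕ) + 1 then 1 else 0 := by
    intro a c ha1 ha2
    have hk : (a : ℕ) - (n - ρ) + 1 < ρ := by omega
    have ha : a = ⟨n - ρ + ((a : ℕ) - (n - ρ)), by omega⟩ := Fin.ext (by simp; omega)
    conv_lhs => rw [ha]
    rw [hTArow ((a : ℕ) - (n - ρ)) hk c, Matrix.one_apply]
    by_cases hc : (c : ℕ) = (a : ℕ) + 1
    · rw [if_pos hc, if_pos (Fin.ext (by simp; omega))]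
    · rw [if_neg hc, if_neg (by intro h; apply hc; have := congrArg Fin.val h; simp at this; omega)]
  -- Aeta entries
  have hAetaE : ∀ (i j : Fin (n - ρ)),
      (T * A * T⁻¹) ⟨(i : ℕ), by omega⟩ ⟨(j : ℕ), by omega⟩ = Aeta i j := by
    intro i j
    rw [hAeta, Matrix.mul_apply, Matrix.mul_apply]
    refine Finset.sum_congr rfl fun m _ => ?_
    congr 1
    · rw [Matrix.mul_apply, Matrix.mul_apply]
      refine Finset.sum_congr rfl fun p _ => ?_
      congr 1
      rw [hT, dif_pos (by simpa using i.isLt)]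
    · exact (hSeta m j).symm
  -- the key identity
  have key : (C * M.adjugate * B) 0 0
      = (C * A ^ (ρ - 1) * B) 0 0
        * (s • (1 : Matrix (Fin (n - ρ)) (Fin (n - ρ)) 𝕜) - Aeta).det := by
    have h1 : C * M.adjugate * B = (C * T⁻¹) * (T * M * T⁻¹).adjugate * (T * B) := by
      rw [adj_conj T M hTinv]
      have e1 : C * T⁻¹ * (T * M.adjugate * T⁻¹) * (T * B)
          = C * ((T⁻¹ * T) * (M.adjugate * ((T⁻¹ * T) * B))) := by
        simp only [Matrix.mul_assoc]
      rw [e1, hTT', Matrix.one_mul, Matrix.one_mul, ← Matrix.mul_assoc]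
    have h2 : ((C * T⁻¹) * (T * M * T⁻¹).adjugate) 0 ⟨n - 1, hn1⟩
        = (T * M * T⁻¹).adjugate ⟨n - ρ, hln⟩ ⟨n - 1, hn1⟩ := by
      rw [Matrix.mul_apply]
      calc (∑ i, (C * T⁻¹) 0 i * (T * M * T⁻¹).adjugate i ⟨n - 1, hn1⟩)
          = ∑ i, if (⟨n - ρ, hln⟩ : Fin n) = i
              then (T * M * T⁻¹).adjugate i ⟨n - 1, hn1⟩ else 0 := by
            refine Finset.sum_congr rfl fun i _ => ?_
            rw [hCT i, Matrix.one_apply]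
            by_cases h : (⟨n - ρ, hln⟩ : Fin n) = i
            · rw [if_pos h, if_pos h, one_mul]
            · rw [if_neg h, if_neg h, zero_mul]
        _ = (T * M * T⁻¹).adjugate ⟨n - ρ, hln⟩ ⟨n - 1, hn1⟩ := by
            rw [Finset.sum_ite_eq]
            simp
    have h3 : (((C * T⁻¹) * (T * M * T⁻¹).adjugate) * (T * B)) 0 0
        = (T * M * T⁻¹).adjugate ⟨n - ρ, hln⟩ ⟨n - 1, hn1⟩ * (C * A ^ (ρ - 1) * B) 0 0 := by
      rw [Matrix.mul_apply]
      calc (∑ j, ((C * T⁻¹) * (T * M * T⁻¹).adjugate) 0 j * (T * B) j 0)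
          = ∑ j, if j = (⟨n - 1, hn1⟩ : Fin n)
              then ((C * T⁻¹) * (T * M * T⁻¹).adjugate) 0 j * (C * A ^ (ρ - 1) * B) 0 0
              else 0 := by
            refine Finset.sum_congr rfl fun j _ => ?_
            rw [hTB j]
            by_cases h : j = (⟨n - 1, hn1⟩ : Fin n)
            · rw [if_pos h, if_pos (by rw [h])]
            · rw [if_neg h, if_neg (by intro hv; exact h (Fin.ext hv)), mul_zero]
        _ = ((C * T⁻¹) * (T * M * T⁻¹).adjugate) 0 ⟨n - 1, hn1⟩ * (C * A ^ (ρ - 1) * B) 0 0 := by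
            rw [Finset.sum_ite_eq']
            simp
      rw [h2]
    -- determinant of the updated matrix
    have h4 : (T * M * T⁻¹).adjugate ⟨n - ρ, hln⟩ ⟨n - 1, hn1⟩
        = ((T * M * T⁻¹).updateRow ⟨n - 1, hn1⟩ (Pi.single ⟨n - ρ, hln⟩ 1)).det :=
      Matrix.adjugate_apply _ _ _
    set N : Matrix (Fin n) (Fin n) 𝕜 :=
      (T * M * T⁻¹).updateRow ⟨n - 1, hn1⟩ (Pi.single ⟨n - ρ, hln⟩ 1) with hNdef
    have hNe : ∀ (a c : Fin n), N a c =
        if a = (⟨n - 1, hn1⟩ : Fin n) then (if c = (⟨n - ρ, hln⟩ : Fin n) then 1 else 0)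
        else (T * M * T⁻¹) a c := by
      intro a c
      rw [hNdef, Matrix.updateRow_apply]
      by_cases h : a = (⟨n - 1, hn1⟩ : Fin n)
      · rw [if_pos h, if_pos h, Pi.single_apply]
      · rw [if_neg h, if_neg h]
    have hlρ : (n - ρ) + ρ = n := by omega
    set e : Fin (n - ρ) ⊕ Fin ρ ≃ Fin n := finSumFinEquiv.trans (finCongr hlρ) with he
    have heinl : ∀ i : Fin (n - ρ), (e (Sum.inl i) : ℕ) = (i : ℕ) := by
      intro i; simp [he]
    have heinr : ∀ k : Fin ρ, (e (Sum.inr k) : ℕ) = (n - ρ) + (k : ℕ) := by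
      intro k; simp [he]
    have hdetN : N.det = (s • (1 : Matrix (Fin (n - ρ)) (Fin (n - ρ)) 𝕜) - Aeta).det := by
      rw [← Matrix.det_submatrix_equiv_self e N,
        ← Matrix.fromBlocks_toBlocks (N.submatrix e e)]
      have hB21 : (N.submatrix e e).toBlocks₂₁ = 0 := by
        ext k j
        have hkval := heinr k
        have hjval := heinl j
        have hkb := k.isLt
        have hjb := j.isLt
        simp only [Matrix.toBlocks₂₁, Matrix.of_apply, Matrix.submatrix_apply, Matrix.zero_apply]
        rw [hNe]
        by_cases hklast : (k : ℕ) = ρ - 1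
        · have hc1 : e (Sum.inr k) = ⟨n - 1, hn1⟩ := by
            apply Fin.ext
            rw [hkval]
            show n - ρ + (k : ℕ) = n - 1
            omega
          rw [if_pos hc1]
          have hc2 : e (Sum.inl j) ≠ ⟨n - ρ, hln⟩ := by
            intro h
            have hv : (j : ℕ) = n - ρ := by rw [← hjval, h]
            omega
          rw [if_neg hc2]
        · have hc1 : e (Sum.inr k) ≠ ⟨n - 1, hn1⟩ := by
            intro h
            have hv : n - ρ + (k : ℕ) = n - 1 := by rw [← hkval, h]
            omega
          rw [if_neg hc1, hMt, hTAT _ _ (by rw [hkval]; omega) (by rw [hkval]; omega)]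
          have hc3 : ¬ (e (Sum.inr k) = e (Sum.inl j)) := by
            intro h
            have hv : n - ρ + (k : ℕ) = (j : ℕ) := by rw [← hkval, ← hjval, h]
            omega
          have hc4 : ¬ ((e (Sum.inl j) : ℕ) = (e (Sum.inr k) : ℕ) + 1) := by
            rw [hkval, hjval]; omega
          rw [if_neg hc3, if_neg hc4]
          simp
      rw [hB21, Matrix.det_fromBlocks_zero₂₁]
      have hB11 : (N.submatrix e e).toBlocks₁₁
          = s • (1 : Matrix (Fin (n - ρ)) (Fin (n - ρ)) 𝕜) - Aeta := by
        ext i j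
        have hival := heinl i
        have hjval := heinl j
        have hib := i.isLt
        have hjb := j.isLt
        simp only [Matrix.toBlocks₁₁, Matrix.of_apply, Matrix.submatrix_apply]
        rw [hNe]
        have hc1 : e (Sum.inl i) ≠ ⟨n - 1, hn1⟩ := by
          intro h
          have hv : (i : ℕ) = n - 1 := by rw [← hival, h]
          omega
        rw [if_neg hc1, hMt]
        have hei : e (Sum.inl i) = ⟨(i : ℕ), by omega⟩ := Fin.ext hival
        have hej : e (Sum.inl j) = ⟨(j : ℕ), by omega⟩ := Fin.ext hjval
        have hAe : (T * A * T⁻¹) (e (Sum.inl i)) (e (Sum.inl j)) = Aeta i j := by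
          rw [hei, hej]; exact hAetaE i j
        rw [hAe]
        have hcij : (e (Sum.inl i) = e (Sum.inl j)) ↔ (i = j) := by
          constructor
          · intro h
            have hv : (i : ℕ) = (j : ℕ) := by rw [← hival, ← hjval, h]
            exact Fin.ext hv
          · intro h; rw [h]
        simp only [Matrix.sub_apply, Matrix.smul_apply, Matrix.one_apply, smul_eq_mul,
          mul_ite, mul_one, mul_zero]
        congr 1
        by_cases hij : i = j
        · rw [if_pos (hcij.mpr hij), if_pos hij]
        · rw [if_neg (fun h => hij (hcij.mp h)), if_neg hij]
      have hB22 : (N.submatrix e e).toBlocks₂₂.det = 1 := by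
        refine detD_aux hρ s _ fun k m => ?_
        have hkval := heinr k
        have hmval := heinr m
        have hkb := k.isLt
        have hmb := m.isLt
        simp only [Matrix.toBlocks₂₂, Matrix.of_apply, Matrix.submatrix_apply]
        rw [hNe]
        by_cases hklast : (k : ℕ) = ρ - 1
        · have hc1 : e (Sum.inr k) = ⟨n - 1, hn1⟩ := by
            apply Fin.ext
            rw [hkval]
            show n - ρ + (k : ℕ) = n - 1
            omega
          rw [if_pos hc1, if_pos hklast]
          by_cases hm0 : (m : ℕ) = 0
          · have hc2 : e (Sum.inr m) = ⟨n - ρ, hln⟩ := by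
              apply Fin.ext
              rw [hmval]
              show n - ρ + (m : ℕ) = n - ρ
              omega
            rw [if_pos hc2, if_pos hm0]
          · have hc2 : e (Sum.inr m) ≠ ⟨n - ρ, hln⟩ := by
              intro h
              have hv : n - ρ + (m : ℕ) = n - ρ := by rw [← hmval, h]
              omega
            rw [if_neg hc2, if_neg hm0]
        · have hc1 : e (Sum.inr k) ≠ ⟨n - 1, hn1⟩ := by
            intro h
            have hv : n - ρ + (k : ℕ) = n - 1 := by rw [← hkval, h]
            omega
          rw [if_neg hc1, if_neg hklast, hMt,
            hTAT _ _ (by rw [hkval]; omega) (by rw [hkval]; omega)]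
          congr 1
          · have hckm : (e (Sum.inr k) = e (Sum.inr m)) ↔ k = m := by
              constructor
              · intro h
                have hv : n - ρ + (k : ℕ) = n - ρ + (m : ℕ) := by rw [← hkval, ← hmval, h]
                exact Fin.ext (by omega)
              · intro h; rw [h]
            by_cases hkm : k = m
            · rw [if_pos (hckm.mpr hkm), if_pos hkm]
            · rw [if_neg (fun h => hkm (hckm.mp h)), if_neg hkm]
          · have hcs : ((e (Sum.inr m) : ℕ) = (e (Sum.inr k) : ℕ) + 1) ↔ ((m : ℕ) = (k : ℕ) + 1) := by
              rw [hkval, hmval]; omega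
            by_cases hsucc : (m : ℕ) = (k : ℕ) + 1
            · rw [if_pos (hcs.mpr hsucc), if_pos hsucc]
            · rw [if_neg (fun h => hsucc (hcs.mp h)), if_neg hsucc]
      rw [hB11, hB22, mul_one]
    rw [h1, h3, h4, hdetN, mul_comm]
  rw [key, mul_eq_zero]
  exact or_iff_right hb
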